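/- (Convergence of NPA-I.) Let ℱ : ℝ^m → ℝ^m be a map and C₁ ≥ 0 a constant such that ‖(ℱ(U) − P_1·U) − (ℱ(V) − P_1·V)‖ ≤ C₁·ΔT²·‖U − V‖ for all U, V ∈ ℝ^m. Let N ≥ 1 be an integer, u⁰ ∈ ℝ^m, define the fine solution by U(T_0) = u⁰ and U(T_{n+1}) = ℱ(U(T_n)) for 0 ≤ n ≤ N−1, and let (U_n^k)_{0≤n≤N, k≥0} satisfy U_0^k = u⁰ for all k and U_{n+1}^{k+1} = P_1·U_n^{k+1} + ℱ(U_n^k) − P_1·U_n^k for 0 ≤ n ≤ N−1 and k ≥ 0. Set E_n^k = U(T_n) − U_n^k and β = ‖P_1‖ (so β < 1). Then for every k ≥ 0, max_{1≤j≤N} ‖E_j^{k+1}‖ ≤ (C₁·ΔT²)^{k+1} · min{ ((1 − β^{N−1})/(1 − β))^{k+1} , C(N−1, k+1) } · max_{1≤j≤N} ‖E_j^0‖, where C(·,·) denotes the binomial coefficient. -/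

import Mathlib

open scoped Matrix


/-- The m×m discrete Dirichlet Laplacian with mesh size `h`. -/
noncomputable def Dh (m : ℕ) (h : ℝ) : Matrix (Fin m) (Fin m) ℝ :=
  Matrix.of fun i j =>
    if (i : ℕ) = (j : ℕ) then 1 / h ^ 2 * (-2)
    else if (i : ℕ) + 1 = (j : ℕ) ∨ (j : ℕ) + 1 = (i : ℕ) then 1 / h ^ 2 * 1
    else 0

/-- `Pmat m h ΔT ε i = (I − iΔT·D_h + ε²ΔT·D_h²)⁻¹ (I − iΔT·D_h)`. -/
noncomputable def Pmat (m : ℕ) (h ΔT ε : ℝ) (i : ℕ) : Matrix (Fin m) (Fin m) ℝ :=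
  ((1 : Matrix (Fin m) (Fin m) ℝ) - ((i : ℝ) * ΔT) • Dh m h
      + (ε ^ 2 * ΔT) • Dh m h ^ 2)⁻¹
    * ((1 : Matrix (Fin m) (Fin m) ℝ) - ((i : ℝ) * ΔT) • Dh m h)

/-- `PJmat m h ΔT ε J i = [(I − (iΔT/J)·D_h + ε²(ΔT/J)·D_h²)⁻¹ (I − (iΔT/J)·D_h)]^J`. -/
noncomputable def PJmat (m : ℕ) (h ΔT ε : ℝ) (J i : ℕ) : Matrix (Fin m) (Fin m) ℝ :=
  (((1 : Matrix (Fin m) (Fin m) ℝ) - ((i : ℝ) * ΔT / (J : ℝ)) • Dh m h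
      + (ε ^ 2 * (ΔT / (J : ℝ))) • Dh m h ^ 2)⁻¹
    * ((1 : Matrix (Fin m) (Fin m) ℝ) - ((i : ℝ) * ΔT / (J : ℝ)) • Dh m h)) ^ J

/-- The action of a matrix on `EuclideanSpace ℝ (Fin m)` (i.e. `ℝ^m` with the
Euclidean norm), given by matrix-vector multiplication. -/
noncomputable def act {m : ℕ} (A : Matrix (Fin m) (Fin m) ℝ)
    (U : EuclideanSpace ℝ (Fin m)) : EuclideanSpace ℝ (Fin m) :=
  Matrix.toEuclideanCLM (𝕜 := ℝ) A U

/-- The operator (spectral) norm of a matrix, induced by the Euclidean norm. -/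
noncomputable def opNorm {m : ℕ} (A : Matrix (Fin m) (Fin m) ℝ) : ℝ :=
  ‖Matrix.toEuclideanCLM (𝕜 := ℝ) A‖

noncomputable def Lmat (m : ℕ) : Matrix (Fin (m+1)) (Fin m) ℝ :=
  Matrix.of fun i j => (if (i : ℕ) = (j : ℕ) then 1 else 0) - (if (i : ℕ) = (j : ℕ) + 1 then 1 else 0)

lemma sum_ite_coe {M : ℕ} (t : ℕ) (f : Fin M → ℝ) :
    ∑ i : Fin M, (if (i : ℕ) = t then f i else 0) = if h : t < M then f ⟨t, h⟩ else 0 := by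
  split
  · next h =>
    rw [Finset.sum_eq_single (⟨t, h⟩ : Fin M)]
    · simp
    · intro i _ hi
      rw [if_neg]
      intro hc
      exact hi (by ext; simpa using hc)
    · simp
  · next h =>
    apply Finset.sum_eq_zero
    intro i _
    rw [if_neg]
    intro hc
    exact h (hc ▸ i.isLt)

lemma Dh_transpose (m : ℕ) (h : ℝ) : (Dh m h)ᵀ = Dh m h := by
  ext i j
  simp only [Dh, Matrix.transpose_apply, Matrix.of_apply]
  split_ifs <;> first | rfl | omega

lemma L_transpose_mul_L (m : ℕ) (h : ℝ) (hh : h ≠ 0) :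
    (Lmat m)ᵀ * Lmat m = (-(h^2)) • Dh m h := by
  ext j k
  simp only [Matrix.mul_apply, Matrix.transpose_apply, Lmat, Dh, Matrix.of_apply,
    Matrix.smul_apply, smul_eq_mul, sub_mul, ite_mul, one_mul, zero_mul]
  rw [Finset.sum_sub_distrib, sum_ite_coe (M := m+1) (j : ℕ), sum_ite_coe (M := m+1) ((j : ℕ)+1)]
  rw [dif_pos (by omega : (j:ℕ) < m+1), dif_pos (by omega : (j:ℕ)+1 < m+1)]
  have h2 : h^2 ≠ 0 := pow_ne_zero _ hh
  split_ifs <;> simp_all <;> (first | omega | field_simp | ring_nf) <;> norm_num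

lemma sum_ite_coe' {M : ℕ} (t : ℕ) (f : Fin M → ℝ) :
    ∑ i : Fin M, (if t = (i : ℕ) then f i else 0) = if h : t < M then f ⟨t, h⟩ else 0 := by
  rw [← sum_ite_coe (M := M) t f]
  exact Finset.sum_congr rfl fun i _ => if_congr (by omega) rfl rfl

lemma Lmat_inj {m : ℕ} (x : Fin m → ℝ) (hx : (Lmat m).mulVec x = 0) : x = 0 := by
  have row : ∀ (n : ℕ) (hn : n < m + 1),
      (0 : ℝ) = (if h : n < m then x ⟨n, h⟩ else 0)
        - (∑ j : Fin m, (if n = (j : ℕ) + 1 then x j else 0)) := by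
    intro n hn
    have := congrFun hx ⟨n, hn⟩
    simp only [Matrix.mulVec, dotProduct, Lmat, Matrix.of_apply, Pi.zero_apply,
      sub_mul, ite_mul, one_mul, zero_mul] at this
    rw [Finset.sum_sub_distrib, sum_ite_coe' (M := m) n x] at this
    linarith
  have key : ∀ (n : ℕ) (hn : n < m), x ⟨n, hn⟩ = 0 := by
    intro n
    induction n with
    | zero =>
      intro hn
      have := row 0 (by omega)
      rw [dif_pos hn] at this
      simpa using this.symm
    | succ s ih =>
      intro hn
      have := row (s+1) (by omega)
      rw [dif_pos hn] at this
      have hs : ∑ j : Fin m, (if s + 1 = (j : ℕ) + 1 then x j else 0) = x ⟨s, by omega⟩ := by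
        have he : ∀ j : Fin m, (if s + 1 = (j : ℕ) + 1 then x j else 0)
            = (if s = (j : ℕ) then x j else 0) :=
          fun j => if_congr (by omega) rfl rfl
        rw [Finset.sum_congr rfl (fun j _ => he j), sum_ite_coe' (M := m) s x,
          dif_pos (by omega : s < m)]
      rw [hs, ih (by omega)] at this
      linarith
  ext n
  exact key n n.isLt

lemma Dh_factor {m : ℕ} (h : ℝ) (hh : h ≠ 0) (x : Fin m → ℝ) :
    (Dh m h).mulVec x ⬝ᵥ x
      = (-(h^2))⁻¹ * (((Lmat m).mulVec x) ⬝ᵥ ((Lmat m).mulVec x)) := by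
  have hD : Dh m h = (-(h^2))⁻¹ • ((Lmat m)ᵀ * Lmat m) := by
    rw [L_transpose_mul_L m h hh, smul_smul, inv_mul_cancel₀ (by simp [hh] : -(h^2) ≠ 0),
      one_smul]
  conv_lhs => rw [hD]
  rw [Matrix.smul_mulVec, smul_dotProduct, smul_eq_mul, ← Matrix.mulVec_mulVec,
    dotProduct_comm, Matrix.dotProduct_mulVec, Matrix.vecMul_transpose]

lemma Dh_quad_nonpos {m : ℕ} {h : ℝ} (hh : 0 < h) (x : Fin m → ℝ) :
    (Dh m h).mulVec x ⬝ᵥ x ≤ 0 := by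
  rw [Dh_factor h (ne_of_gt hh) x]
  have h1 : (0:ℝ) ≤ ((Lmat m).mulVec x) ⬝ᵥ ((Lmat m).mulVec x) :=
    Finset.sum_nonneg fun i _ => mul_self_nonneg _
  have h2 : (-(h^2))⁻¹ ≤ 0 := by
    rw [inv_nonpos]
    nlinarith
  exact mul_nonpos_of_nonpos_of_nonneg h2 h1

lemma Dh_inj {m : ℕ} {h : ℝ} (hh : 0 < h) (x : Fin m → ℝ)
    (hx : (Dh m h).mulVec x = 0) : x = 0 := by
  have h0 : (Dh m h).mulVec x ⬝ᵥ x = 0 := by rw [hx]; simp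
  rw [Dh_factor h (ne_of_gt hh) x] at h0
  have hinv : (-(h^2))⁻¹ ≠ 0 := by
    simp only [ne_eq, inv_eq_zero, neg_eq_zero]
    positivity
  have := (mul_eq_zero.mp h0).resolve_left hinv
  exact Lmat_inj x (dotProduct_self_eq_zero.mp this)

lemma act_mulVec {m : ℕ} (A : Matrix (Fin m) (Fin m) ℝ) (U : EuclideanSpace ℝ (Fin m)) :
    (act A U : Fin m → ℝ) = A.mulVec U := rfl

lemma dp_inner {m : ℕ} (u v : Fin m → ℝ) :
    u ⬝ᵥ v = @inner ℝ (EuclideanSpace ℝ (Fin m)) _ (WithLp.toLp 2 v) (WithLp.toLp 2 u) := by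
  simp [PiLp.inner_apply, dotProduct, mul_comm]

lemma norm_sq_eq_dp {m : ℕ} (v : EuclideanSpace ℝ (Fin m)) :
    ‖v‖ ^ 2 = (v : Fin m → ℝ) ⬝ᵥ (v : Fin m → ℝ) := by
  rw [dp_inner, WithLp.toLp_ofLp, real_inner_self_eq_norm_sq]

lemma dp_shift {m : ℕ} {D : Matrix (Fin m) (Fin m) ℝ} (hsym : Dᵀ = D) (u v : Fin m → ℝ) :
    u ⬝ᵥ (D.mulVec v) = (D.mulVec u) ⬝ᵥ v := by
  rw [Matrix.dotProduct_mulVec]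
  congr 1
  conv_lhs => rw [← hsym, Matrix.vecMul_transpose]

lemma dp_self_nonneg {m : ℕ} (v : Fin m → ℝ) : 0 ≤ v ⬝ᵥ v :=
  Finset.sum_nonneg fun i _ => mul_self_nonneg _

theorem key_norm_lt_one {m : ℕ} (hm : 1 ≤ m) {h a b : ℝ} (hh : 0 < h)
    (ha : 0 < a) (hb : 0 < b) :
    opNorm (((1 : Matrix (Fin m) (Fin m) ℝ) - a • Dh m h + b • Dh m h ^ 2)⁻¹
      * ((1 : Matrix (Fin m) (Fin m) ℝ) - a • Dh m h)) < 1 := by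
  set D := Dh m h with hD
  have hsym : Dᵀ = D := Dh_transpose m h
  set B : Matrix (Fin m) (Fin m) ℝ := 1 - a • D with hBdef
  set A : Matrix (Fin m) (Fin m) ℝ := 1 - a • D + b • D ^ 2 with hAdef
  have hAB : A = B + b • D ^ 2 := rfl
  -- vector-level computations
  have hBv : ∀ y : Fin m → ℝ, B.mulVec y = y - a • D.mulVec y := by
    intro y
    rw [hBdef, Matrix.sub_mulVec, Matrix.one_mulVec, Matrix.smul_mulVec]
  have hAv : ∀ y : Fin m → ℝ, A.mulVec y = B.mulVec y + b • D.mulVec (D.mulVec y) := by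
    intro y
    rw [hAB, Matrix.add_mulVec, Matrix.smul_mulVec, pow_two, ← Matrix.mulVec_mulVec]
  have hD2 : ∀ y : Fin m → ℝ, y ⬝ᵥ (D.mulVec (D.mulVec y)) = (D.mulVec y) ⬝ᵥ (D.mulVec y) := by
    intro y
    rw [dp_shift hsym]
  -- A is injective, hence invertible
  have hAinj : ∀ y : Fin m → ℝ, A.mulVec y = 0 → y = 0 := by
    intro y hy
    have h0 : y ⬝ᵥ A.mulVec y = 0 := by rw [hy, dotProduct_zero]
    rw [hAv, dotProduct_add, hBv, dotProduct_sub, dotProduct_smul,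
      dotProduct_smul, hD2, smul_eq_mul, smul_eq_mul, dp_shift hsym] at h0
    have h1 : D.mulVec y ⬝ᵥ y ≤ 0 := Dh_quad_nonpos hh y
    have h2 : 0 ≤ (D.mulVec y) ⬝ᵥ (D.mulVec y) := dp_self_nonneg _
    have h3 : 0 ≤ y ⬝ᵥ y := dp_self_nonneg _
    have h4 : y ⬝ᵥ y = 0 := by nlinarith [dotProduct_comm (D.mulVec y) y]
    exact dotProduct_self_eq_zero.mp h4
  have hAunit : IsUnit A := by
    rw [← Matrix.mulVec_injective_iff_isUnit]
    intro y z hyz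
    have : A.mulVec (y - z) = 0 := by
      rw [Matrix.mulVec_sub, hyz, sub_self]
    have := hAinj _ this
    exact sub_eq_zero.mp this
  have hdet : IsUnit A.det := (Matrix.isUnit_iff_isUnit_det A).mp hAunit
  have hAinvA : A⁻¹ * A = 1 := Matrix.nonsing_inv_mul A hdet
  have hAAinv : A * A⁻¹ = 1 := Matrix.mul_nonsing_inv A hdet
  -- commutation
  have hDsq : Commute (a • D) (b • D ^ 2) :=
    (((Commute.refl D).pow_right 2).smul_left a).smul_right b
  have hBC : Commute B (b • D ^ 2) := (Commute.one_left _).sub_left hDsq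
  have hcomm : B * A = A * B := ((Commute.refl B).add_right hBC)
  -- quadratic comparison
  have hcompare : ∀ y : Fin m → ℝ,
      (B.mulVec y ⬝ᵥ B.mulVec y) ≤ (A.mulVec y ⬝ᵥ A.mulVec y)
      ∧ ((B.mulVec y ⬝ᵥ B.mulVec y) = (A.mulVec y ⬝ᵥ A.mulVec y) → y = 0) := by
    intro y
    have hA := hAv y
    set u := B.mulVec y with hu
    set w := b • D.mulVec (D.mulVec y) with hw
    have expand : A.mulVec y ⬝ᵥ A.mulVec y = u ⬝ᵥ u + 2 * (u ⬝ᵥ w) + w ⬝ᵥ w := by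
      rw [hA, add_dotProduct, dotProduct_add, dotProduct_add,
        dotProduct_comm w u]
      ring
    have huw : 0 ≤ u ⬝ᵥ w := by
      rw [hu, hw, hBv, sub_dotProduct, dotProduct_smul, smul_dotProduct,
        dotProduct_smul, smul_eq_mul, smul_eq_mul, smul_eq_mul, hD2]
      have h1 : (D.mulVec y) ⬝ᵥ (D.mulVec (D.mulVec y)) ≤ 0 := by
        rw [dotProduct_comm]
        exact Dh_quad_nonpos hh (D.mulVec y)
      have h2 : 0 ≤ (D.mulVec y) ⬝ᵥ (D.mulVec y) := dp_self_nonneg _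
      nlinarith [mul_nonneg hb.le h2, mul_nonneg (mul_nonneg ha.le hb.le) (neg_nonneg.2 h1)]
    have hww : 0 ≤ w ⬝ᵥ w := dp_self_nonneg _
    constructor
    · nlinarith
    · intro heq
      have hwz : w ⬝ᵥ w = 0 := by nlinarith
      have hw0 : w = 0 := dotProduct_self_eq_zero.mp hwz
      have hDDy : D.mulVec (D.mulVec y) = 0 := by
        have := hw0
        rw [hw] at this
        exact (smul_eq_zero.mp this).resolve_left (ne_of_gt hb)
      have hDy : D.mulVec y = 0 := by
        have : (D.mulVec y) ⬝ᵥ (D.mulVec y) = 0 := by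
          rw [← hD2, hDDy, dotProduct_zero]
        exact dotProduct_self_eq_zero.mp this
      exact Dh_inj hh y hDy
  -- contraction at CLM level
  set P := A⁻¹ * B with hP
  have hcontr : ∀ x : EuclideanSpace ℝ (Fin m),
      ‖act P x‖ ≤ ‖x‖ ∧ (‖act P x‖ = ‖x‖ → x = 0) := by
    intro x
    set y : Fin m → ℝ := A⁻¹.mulVec x with hy
    have hx : (x : Fin m → ℝ) = A.mulVec y := by
      rw [hy, Matrix.mulVec_mulVec, hAAinv, Matrix.one_mulVec]
    have hPx : (act P x : Fin m → ℝ) = B.mulVec y := by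
      rw [act_mulVec, hP, hx, Matrix.mulVec_mulVec, Matrix.mul_assoc, hcomm,
        ← Matrix.mul_assoc, hAinvA, Matrix.one_mul, Matrix.mulVec_mulVec]
    have hsq : ‖act P x‖ ^ 2 ≤ ‖x‖ ^ 2 := by
      rw [norm_sq_eq_dp, norm_sq_eq_dp, hPx, hx]
      exact (hcompare y).1
    have hle : ‖act P x‖ ≤ ‖x‖ := by
      have := Real.sqrt_le_sqrt hsq
      rwa [Real.sqrt_sq (norm_nonneg _), Real.sqrt_sq (norm_nonneg _)] at this
    refine ⟨hle, fun heq => ?_⟩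
    have hsqeq : (B.mulVec y ⬝ᵥ B.mulVec y) = (A.mulVec y ⬝ᵥ A.mulVec y) := by
      rw [← hPx, ← hx, ← norm_sq_eq_dp, ← norm_sq_eq_dp, heq]
    have hy0 : y = 0 := (hcompare y).2 hsqeq
    have : (x : Fin m → ℝ) = 0 := by rw [hx, hy0, Matrix.mulVec_zero]
    exact (WithLp.ofLp_eq_zero 2).mp this
  -- compactness argument
  set T := Matrix.toEuclideanCLM (𝕜 := ℝ) P with hT
  have hTact : ∀ x, T x = act P x := fun _ => rfl
  have hsne : (Metric.sphere (0 : EuclideanSpace ℝ (Fin m)) 1).Nonempty := by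
    refine ⟨EuclideanSpace.single ⟨0, hm⟩ (1 : ℝ), ?_⟩
    simp [mem_sphere_zero_iff_norm, EuclideanSpace.norm_single]
  obtain ⟨x₀, hx₀mem, hx₀max⟩ :=
    (isCompact_sphere (0 : EuclideanSpace ℝ (Fin m)) 1).exists_isMaxOn hsne
      (T.continuous.norm.continuousOn)
  have hx₀ : ‖x₀‖ = 1 := mem_sphere_zero_iff_norm.mp hx₀mem
  set c := ‖T x₀‖ with hc
  have hclt : c < 1 := by
    have hle1 : c ≤ 1 := by rw [hc, hTact]; exact hx₀ ▸ (hcontr x₀).1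
    refine lt_of_le_of_ne hle1 fun hceq => ?_
    have heq : ‖act P x₀‖ = ‖x₀‖ := by
      rw [← hTact x₀, ← hc, hceq, hx₀]
    have h00 := (hcontr x₀).2 heq
    rw [h00] at hx₀
    simp at hx₀
  have hnorm : opNorm P ≤ c := by
    rw [opNorm, ← hT]
    refine T.opNorm_le_bound (norm_nonneg _) fun x => ?_
    by_cases hx : x = 0
    · simp [hx]
    · have hxn : (0:ℝ) < ‖x‖ := norm_pos_iff.mpr hx
      set z := ‖x‖⁻¹ • x with hz
      have hzn : ‖z‖ = 1 := by
        rw [hz, norm_smul, norm_inv, norm_norm, inv_mul_cancel₀ (ne_of_gt hxn)]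
      have hzsph : z ∈ Metric.sphere (0 : EuclideanSpace ℝ (Fin m)) 1 :=
        mem_sphere_zero_iff_norm.mpr hzn
      have hmax := hx₀max hzsph
      have hxz : x = ‖x‖ • z := by
        rw [hz, smul_smul, mul_inv_cancel₀ (ne_of_gt hxn), one_smul]
      calc ‖T x‖ = ‖x‖ * ‖T z‖ := by
            conv_lhs => rw [hxz]
            rw [map_smul, norm_smul, norm_norm]
        _ ≤ ‖x‖ * c := by exact mul_le_mul_of_nonneg_left hmax (le_of_lt hxn)
        _ = c * ‖x‖ := mul_comm _ _
  exact lt_of_le_of_lt hnorm hclt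

lemma opNorm_Pmat_lt_one {m : ℕ} (hm : 1 ≤ m) {h ΔT ε : ℝ} (hh : 0 < h)
    (hΔT : 0 < ΔT) (hε : 0 < ε) : opNorm (Pmat m h ΔT ε 1) < 1 := by
  have h1 : ((1 : ℕ) : ℝ) * ΔT = ΔT := by norm_num
  have := key_norm_lt_one (m := m) hm hh (a := ((1 : ℕ) : ℝ) * ΔT)
    (by rw [h1]; exact hΔT) (b := ε ^ 2 * ΔT) (by positivity)
  exact this

lemma sum_Icc_one (n : ℕ) (f : ℕ → ℝ) :
    ∑ j ∈ Finset.Icc 1 n, f j = ∑ t ∈ Finset.range n, f (t + 1) := by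
  induction n with
  | zero => simp
  | succ n ih =>
    rw [Finset.sum_Icc_succ_top (by omega : 1 ≤ n + 1), ih, Finset.sum_range_succ]

lemma hockey (t k : ℕ) : ∑ i ∈ Finset.range t, Nat.choose i k = Nat.choose t (k + 1) := by
  induction t with
  | zero => simp
  | succ t ih =>
    rw [Finset.sum_range_succ, ih, Nat.choose_succ_succ' t k]
    omega

theorem stmt16 (h ΔT ε : ℝ) (hh : 0 < h) (hΔT : 0 < ΔT) (hε : 0 < ε)
    (m : ℕ) (hm : 1 ≤ m)
    (F : EuclideanSpace ℝ (Fin m) → EuclideanSpace ℝ (Fin m))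
    (C₁ : ℝ) (hC₁ : 0 ≤ C₁)
    (hLTE : ∀ U V, ‖(F U - act (Pmat m h ΔT ε 1) U) - (F V - act (Pmat m h ΔT ε 1) V)‖
      ≤ C₁ * ΔT ^ 2 * ‖U - V‖)
    (N : ℕ) (hN : 1 ≤ N)
    (u0 : EuclideanSpace ℝ (Fin m))
    (Uf : ℕ → EuclideanSpace ℝ (Fin m)) (U : ℕ → ℕ → EuclideanSpace ℝ (Fin m))
    (hUf0 : Uf 0 = u0)
    (hUfrec : ∀ n < N, Uf (n + 1) = F (Uf n))
    (h0 : ∀ k, U 0 k = u0)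
    (hrec : ∀ n < N, ∀ k, U (n + 1) (k + 1) =
      act (Pmat m h ΔT ε 1) (U n (k + 1)) + F (U n k)
        - act (Pmat m h ΔT ε 1) (U n k)) :
    ∀ k : ℕ,
      ((Finset.Icc 1 N).sup' (Finset.nonempty_Icc.mpr hN)
          fun j => ‖Uf j - U j (k + 1)‖) ≤
        (C₁ * ΔT ^ 2) ^ (k + 1) *
          min (((1 - opNorm (Pmat m h ΔT ε 1) ^ (N - 1)) /
                  (1 - opNorm (Pmat m h ΔT ε 1))) ^ (k + 1))
              ((N - 1).choose (k + 1) : ℝ) *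
          ((Finset.Icc 1 N).sup' (Finset.nonempty_Icc.mpr hN)
            fun j => ‖Uf j - U j 0‖) := by
  intro k
  set P := Pmat m h ΔT ε 1 with hPdef
  set β := opNorm P with hβdef
  have hβ0 : 0 ≤ β := norm_nonneg _
  have hβ1 : β < 1 := opNorm_Pmat_lt_one hm hh hΔT hε
  set a := C₁ * ΔT ^ 2 with hadef
  have ha0 : 0 ≤ a := by positivity
  set M : ℕ → ℝ := fun k' => (Finset.Icc 1 N).sup' (Finset.nonempty_Icc.mpr hN)
    (fun j => ‖Uf j - U j k'‖) with hMdef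
  have hMle : ∀ k', ∀ j, 1 ≤ j → j ≤ N → ‖Uf j - U j k'‖ ≤ M k' := by
    intro k' j h1 h2
    exact Finset.le_sup' (fun j => ‖Uf j - U j k'‖) (Finset.mem_Icc.mpr ⟨h1, h2⟩)
  have hM0 : ∀ k', 0 ≤ M k' :=
    fun k' => le_trans (norm_nonneg _) (hMle k' N hN le_rfl)
  -- the zero-th errors vanish
  have hE0 : ∀ k', Uf 0 - U 0 k' = 0 := by
    intro k'; rw [hUf0, h0, sub_self]
  -- one-step recursion
  have hstep : ∀ n, n < N → ∀ k',
      ‖Uf (n+1) - U (n+1) (k'+1)‖ ≤ β * ‖Uf n - U n (k'+1)‖ + a * ‖Uf n - U n k'‖ := by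
    intro n hn k'
    have hdecomp : Uf (n+1) - U (n+1) (k'+1)
        = (act P (Uf n) - act P (U n (k'+1)))
          + ((F (Uf n) - act P (Uf n)) - (F (U n k') - act P (U n k'))) := by
      rw [hUfrec n hn, hrec n hn k']
      abel
    rw [hdecomp]
    refine (norm_add_le _ _).trans ?_
    have h1 : ‖act P (Uf n) - act P (U n (k'+1))‖ ≤ β * ‖Uf n - U n (k'+1)‖ := by
      have he : act P (Uf n) - act P (U n (k'+1)) = act P (Uf n - U n (k'+1)) := by
        simp only [act, map_sub]
      rw [he, hβdef, opNorm]
      exact (Matrix.toEuclideanCLM (𝕜 := ℝ) P).le_opNorm _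
    have h2 := hLTE (Uf n) (U n k')
    linarith
  -- unrolled recursion
  have hunroll : ∀ k', ∀ n, n ≤ N →
      ‖Uf n - U n (k'+1)‖ ≤ a * ∑ j ∈ Finset.Icc 1 (n-1), β ^ (n-1-j) * ‖Uf j - U j k'‖ := by
    intro k' n
    induction n with
    | zero =>
      intro _
      rw [hE0, norm_zero]
      exact mul_nonneg ha0 (Finset.sum_nonneg fun j _ =>
        mul_nonneg (pow_nonneg hβ0 _) (norm_nonneg _))
    | succ n ih =>
      intro hn1
      have hb := hstep n (by omega) k'
      match n, ih, hb with
      | 0, ih, hb =>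
        rw [hE0, hE0, norm_zero] at hb
        have h00 : ‖Uf (0+1) - U (0+1) (k'+1)‖ ≤ 0 := by
          simpa using hb
        refine h00.trans ?_
        rw [show (0+1-1 : ℕ) = 0 from rfl, Finset.Icc_eq_empty (by omega),
          Finset.sum_empty, mul_zero]
      | (s+1), ih, hb =>
        have ihn := ih (by omega)
        have hsum : ∑ j ∈ Finset.Icc 1 (s+1), β ^ (s+1-j) * ‖Uf j - U j k'‖
            = β * (∑ j ∈ Finset.Icc 1 s, β ^ (s-j) * ‖Uf j - U j k'‖)
              + ‖Uf (s+1) - U (s+1) k'‖ := by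
          rw [Finset.sum_Icc_succ_top (by omega : 1 ≤ s + 1), Nat.sub_self, pow_zero, one_mul,
            Finset.mul_sum]
          congr 1
          refine Finset.sum_congr rfl fun j hj => ?_
          have hjs : j ≤ s := (Finset.mem_Icc.mp hj).2
          rw [← mul_assoc, ← pow_succ']
          congr 2
          omega
        have e1 : (s+1+1) - 1 = s + 1 := by omega
        rw [e1, hsum]
        have h3 : β * ‖Uf (s+1) - U (s+1) (k'+1)‖
            ≤ β * (a * ∑ j ∈ Finset.Icc 1 s, β ^ (s-j) * ‖Uf j - U j k'‖) := by
          refine mul_le_mul_of_nonneg_left ?_ hβ0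
          simpa using ihn
        calc ‖Uf (s+1+1) - U (s+1+1) (k'+1)‖
            ≤ β * ‖Uf (s+1) - U (s+1) (k'+1)‖ + a * ‖Uf (s+1) - U (s+1) k'‖ := hb
          _ ≤ β * (a * ∑ j ∈ Finset.Icc 1 s, β ^ (s-j) * ‖Uf j - U j k'‖)
              + a * ‖Uf (s+1) - U (s+1) k'‖ := by linarith
          _ = a * (β * (∑ j ∈ Finset.Icc 1 s, β ^ (s-j) * ‖Uf j - U j k'‖)
              + ‖Uf (s+1) - U (s+1) k'‖) := by ring
  -- geometric sum
  set S := ∑ t ∈ Finset.range (N-1), β ^ t with hSdef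
  have hS0 : 0 ≤ S := Finset.sum_nonneg fun t _ => pow_nonneg hβ0 t
  have hgeo : ∀ k', M (k'+1) ≤ a * S * M k' := by
    intro k'
    refine Finset.sup'_le _ _ fun j hj => ?_
    obtain ⟨hj1, hjN⟩ := Finset.mem_Icc.mp hj
    have hterm : ∀ i ∈ Finset.Icc 1 (j-1),
        β^(j-1-i) * ‖Uf i - U i k'‖ ≤ β^(j-1-i) * M k' := fun i hi =>
      mul_le_mul_of_nonneg_left
        (hMle k' i (Finset.mem_Icc.mp hi).1
          (by have := (Finset.mem_Icc.mp hi).2; omega))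
        (pow_nonneg hβ0 _)
    have h6 : ∑ i ∈ Finset.Icc 1 (j-1), β^(j-1-i) = ∑ t ∈ Finset.range (j-1), β^t := by
      rw [sum_Icc_one]
      have : ∀ t ∈ Finset.range (j-1), β^(j-1-(t+1)) = β^((j-1) - 1 - t) := by
        intro t ht
        congr 1
        omega
      rw [Finset.sum_congr rfl this]
      exact Finset.sum_range_reflect (fun t => β^t) (j-1)
    have h7 : ∑ t ∈ Finset.range (j-1), β^t ≤ S := by
      rw [hSdef]
      exact Finset.sum_le_sum_of_subset_of_nonneg
        (Finset.range_subset_range.mpr (by omega)) (fun t _ _ => pow_nonneg hβ0 t)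
    calc ‖Uf j - U j (k'+1)‖
        ≤ a * ∑ i ∈ Finset.Icc 1 (j-1), β^(j-1-i) * ‖Uf i - U i k'‖ := hunroll k' j hjN
      _ ≤ a * (S * M k') := by
          refine mul_le_mul_of_nonneg_left ?_ ha0
          refine le_trans (Finset.sum_le_sum hterm) ?_
          rw [← Finset.sum_mul]
          refine mul_le_mul_of_nonneg_right ?_ (hM0 k')
          rw [h6]
          exact h7
      _ = a * S * M k' := by ring
  have hgeo_it : ∀ k', M (k'+1) ≤ (a*S)^(k'+1) * M 0 := by
    intro k'
    induction k' with
    | zero => simpa [pow_one] using hgeo 0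
    | succ k'' ih =>
      calc M (k''+1+1) ≤ a*S*M (k''+1) := hgeo _
        _ ≤ a*S*((a*S)^(k''+1) * M 0) :=
            mul_le_mul_of_nonneg_left ih (mul_nonneg ha0 hS0)
        _ = (a*S)^(k''+1+1) * M 0 := by ring
  -- binomial bound
  have hbin : ∀ k', ∀ j, 1 ≤ j → j ≤ N →
      ‖Uf j - U j k'‖ ≤ a^k' * ((j-1).choose k' : ℝ) * M 0 := by
    intro k'
    induction k' with
    | zero =>
      intro j h1 h2
      simpa using hMle 0 j h1 h2
    | succ k'' ih =>
      intro j h1 h2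
      refine (hunroll k'' j h2).trans ?_
      have hterm : ∀ i ∈ Finset.Icc 1 (j-1),
          β^(j-1-i) * ‖Uf i - U i k''‖ ≤ a^k'' * ((i-1).choose k'' : ℝ) * M 0 := by
        intro i hi
        obtain ⟨hi1, hi2⟩ := Finset.mem_Icc.mp hi
        have hib := ih i hi1 (by omega)
        have hpow : β^(j-1-i) ≤ 1 := pow_le_one₀ hβ0 hβ1.le
        calc β^(j-1-i) * ‖Uf i - U i k''‖
            ≤ 1 * (a^k'' * (((i-1).choose k'' : ℝ)) * M 0) := by
              refine mul_le_mul hpow hib (norm_nonneg _) zero_le_one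
          _ = a^k'' * (((i-1).choose k'' : ℝ)) * M 0 := one_mul _
      refine le_trans (mul_le_mul_of_nonneg_left (Finset.sum_le_sum hterm) ha0) ?_
      have hsum2 : ∑ i ∈ Finset.Icc 1 (j-1), a^k'' * ((i-1).choose k'' : ℝ) * M 0
          = a^k'' * (∑ i ∈ Finset.range (j-1), ((i).choose k'' : ℝ)) * M 0 := by
        rw [sum_Icc_one]
        simp only [Nat.add_sub_cancel]
        rw [← Finset.sum_mul, ← Finset.mul_sum]
      have hcast : (∑ i ∈ Finset.range (j-1), ((i).choose k'' : ℝ))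
          = ((j-1).choose (k''+1) : ℝ) := by
        rw [← Nat.cast_sum, hockey]
      rw [hsum2, hcast]
      exact le_of_eq (by ring)
  -- conclusion
  have hgeoN : M (k+1) ≤ a^(k+1) * S^(k+1) * M 0 := by
    calc M (k+1) ≤ (a*S)^(k+1) * M 0 := hgeo_it k
      _ = a^(k+1) * S^(k+1) * M 0 := by rw [mul_pow]
  have hbinN : M (k+1) ≤ a^(k+1) * ((N-1).choose (k+1) : ℝ) * M 0 := by
    refine Finset.sup'_le _ _ fun j hj => ?_
    obtain ⟨hj1, hjN⟩ := Finset.mem_Icc.mp hj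
    exact hbin (k+1) j hj1 hjN |>.trans
      (mul_le_mul_of_nonneg_right
        (mul_le_mul_of_nonneg_left
          (Nat.cast_le.mpr (Nat.choose_le_choose _ (by omega))) (pow_nonneg ha0 _))
        (hM0 0))
  have hSform : S = (1 - β^(N-1))/(1-β) := by
    rw [hSdef, geom_sum_eq hβ1.ne (N-1),
      show β^(N-1) - 1 = -(1 - β^(N-1)) by ring, show β - 1 = -(1-β) by ring,
      neg_div_neg_eq]
  rw [← hSform]
  rcases le_total (S^(k+1)) (((N-1).choose (k+1) : ℝ)) with hmin | hmin
  · rw [min_eq_left hmin]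
    exact hgeoN
  · rw [min_eq_right hmin]
    exact hbinN
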